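/- Consider the Gibbs measure π_T(a) ∝ g(a)·exp(−μ(a)/T) on a finite set A with unique minimizer a* of μ. Then the derivative of π_{T}(a*) with respect to T is negative for all T > 0; i.e., π_T(a*) is strictly decreasing in T. -/

import Mathlib

open scoped BigOperators

/-- Gibbs measure at temperature `T` with weights `g` and energies `μ`. -/
noncomputable def gibbs {A : Type*} [Fintype A] (g μ : A → ℝ) (T : ℝ) (a : A) : ℝ :=
  g a * Real.exp (-μ a / T) / ∑ a', g a' * Real.exp (-μ a' / T)

private lemma gibbs_aux {A : Type*} [Fintype A]
    (hcard : 1 < Fintype.card A)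
    (g μ : A → ℝ) (hg : ∀ a, 0 < g a) (astar : A)
    (hmin : ∀ a, a ≠ astar → μ astar < μ a)
    (T : ℝ) (hT : 0 < T) :
    ∃ D : ℝ, D < 0 ∧ HasDerivAt (fun T => gibbs g μ T astar) D T := by
  haveI : Nonempty A := Fintype.card_pos_iff.mp (by omega)
  have hS : ∀ t : ℝ, 0 < ∑ a', g a' * Real.exp (-μ a' / t) := fun t =>
    Finset.sum_pos (fun a _ => mul_pos (hg a) (Real.exp_pos _)) Finset.univ_nonempty
  -- derivative of each term
  have hterm : ∀ a : A, HasDerivAt (fun t : ℝ => g a * Real.exp (-μ a / t))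
      (g a * (Real.exp (-μ a / T) * (μ a / T ^ 2))) T := by
    intro a
    have h1 : HasDerivAt (fun t : ℝ => -μ a / t) (μ a / T ^ 2) T := by
      have := (hasDerivAt_const T (-μ a)).fun_div (hasDerivAt_id T) hT.ne'
      simp only [id] at this
      exact this.congr_deriv (by ring)
    exact (h1.exp.const_mul (g a))
  have hSum : HasDerivAt (fun t : ℝ => ∑ a', g a' * Real.exp (-μ a' / t))
      (∑ a', g a' * (Real.exp (-μ a' / T) * (μ a' / T ^ 2))) T :=
    HasDerivAt.fun_sum (fun a _ => hterm a)
  set f' := g astar * (Real.exp (-μ astar / T) * (μ astar / T ^ 2)) with hf'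
  set S := ∑ a', g a' * Real.exp (-μ a' / T) with hSdef
  set S' := ∑ a', g a' * (Real.exp (-μ a' / T) * (μ a' / T ^ 2)) with hS'def
  have hdiv : HasDerivAt (fun t => gibbs g μ t astar)
      ((f' * S - g astar * Real.exp (-μ astar / T) * S') / S ^ 2) T := by
    have := (hterm astar).div hSum (hS T).ne'
    exact this
  refine ⟨_, ?_, hdiv⟩
  apply div_neg_of_neg_of_pos
  · -- numerator negative
    have hnum : f' * S - g astar * Real.exp (-μ astar / T) * S' =
        ∑ a, g astar * Real.exp (-μ astar / T) * (g a * Real.exp (-μ a / T)) *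
          ((μ astar - μ a) / T ^ 2) := by
      rw [hf', hSdef, hS'def, Finset.mul_sum, Finset.mul_sum, ← Finset.sum_sub_distrib]
      exact Finset.sum_congr rfl fun a _ => by ring
    rw [hnum]
    have hzero : (0 : ℝ) = ∑ _a : A, (0 : ℝ) := by simp
    rw [hzero]
    obtain ⟨b, hb⟩ := Fintype.exists_ne_of_one_lt_card hcard astar
    apply Finset.sum_lt_sum
    · intro a _
      apply mul_nonpos_of_nonneg_of_nonpos
      · exact mul_nonneg (mul_nonneg (hg astar).le (Real.exp_pos _).le)
          (mul_nonneg (hg a).le (Real.exp_pos _).le)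
      · apply div_nonpos_of_nonpos_of_nonneg
        · by_cases h : a = astar
          · simp [h]
          · linarith [hmin a h]
        · positivity
    · refine ⟨b, Finset.mem_univ b, ?_⟩
      apply mul_neg_of_pos_of_neg
      · exact mul_pos (mul_pos (hg astar) (Real.exp_pos _))
          (mul_pos (hg b) (Real.exp_pos _))
      · apply div_neg_of_neg_of_pos
        · linarith [hmin b hb]
        · positivity
  · exact pow_pos (hS T) 2

theorem gibbs_optimal_strictAnti {A : Type*} [Fintype A]
    (hcard : 1 < Fintype.card A)
    (g μ : A → ℝ) (hg : ∀ a, 0 < g a) (astar : A)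
    (hmin : ∀ a, a ≠ astar → μ astar < μ a) :
    (∀ T : ℝ, 0 < T → deriv (fun T => gibbs g μ T astar) T < 0) ∧
    StrictAntiOn (fun T => gibbs g μ T astar) (Set.Ioi 0) := by
  have key := gibbs_aux hcard g μ hg astar hmin
  have hderiv : ∀ T : ℝ, 0 < T → deriv (fun T => gibbs g μ T astar) T < 0 := by
    intro T hT
    obtain ⟨D, hD, hdD⟩ := key T hT
    rwa [hdD.deriv]
  refine ⟨hderiv, ?_⟩
  apply strictAntiOn_of_deriv_neg (convex_Ioi 0)
  · intro T hT
    obtain ⟨D, _, hdD⟩ := key T hT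
    exact hdD.differentiableAt.continuousAt.continuousWithinAt
  · intro T hT
    rw [interior_Ioi] at hT
    exact hderiv T hT
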